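/- Let n ≥ 1. The set N_n of tame natural d-paths in [0,1]^n is convex: if γ and γ' are tame natural d-paths and u ∈ [0,1], then the pointwise convex combination (1-u)γ + uγ' is again a tame natural d-path. -/
import Mathlib


open Set

/-- A tame natural d-path of the topological `n`-cube `[0,1]^n`: a continuous map
`γ : [0,n] → [0,1]^n`, nondecreasing in each coordinate, whose endpoints are
vertices, and such that the sum of the coordinates of `γ t` equals `t`. -/
def IsNatPath (n : ℕ) (γ : ℝ → Fin n → ℝ) : Prop :=
  ContinuousOn γ (Icc 0 n) ∧
  (∀ t ∈ Icc (0:ℝ) n, ∀ i, γ t i ∈ Icc (0:ℝ) 1) ∧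
  (∀ s ∈ Icc (0:ℝ) n, ∀ t ∈ Icc (0:ℝ) n, s ≤ t → ∀ i, γ s i ≤ γ t i) ∧
  (∀ i, γ 0 i = 0 ∨ γ 0 i = 1) ∧
  (∀ i, γ (n:ℝ) i = 0 ∨ γ (n:ℝ) i = 1) ∧
  (∀ t ∈ Icc (0:ℝ) n, ∑ i, γ t i = t)

lemma natPath_zero (n : ℕ) (γ : ℝ → Fin n → ℝ) (h : IsNatPath n γ) (i : Fin n) :
    γ 0 i = 0 := by
  obtain ⟨-, hmem, -, -, -, hsum⟩ := h
  have h0 : (0:ℝ) ∈ Icc (0:ℝ) n := ⟨le_refl 0, Nat.cast_nonneg n⟩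
  have hs := hsum 0 h0
  have := (Finset.sum_eq_zero_iff_of_nonneg
    (fun j _ => (hmem 0 h0 j).1)).mp hs i (Finset.mem_univ i)
  exact this

lemma natPath_top (n : ℕ) (γ : ℝ → Fin n → ℝ) (h : IsNatPath n γ) (i : Fin n) :
    γ (n:ℝ) i = 1 := by
  obtain ⟨-, hmem, -, -, -, hsum⟩ := h
  have h0 : (n:ℝ) ∈ Icc (0:ℝ) n := ⟨Nat.cast_nonneg n, le_refl _⟩
  have hs := hsum n h0
  have hsum1 : ∑ j : Fin n, (1 - γ (n:ℝ) j) = 0 := by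
    simp [Finset.sum_sub_distrib, hs]
  have := (Finset.sum_eq_zero_iff_of_nonneg
    (fun j _ => by linarith [(hmem n h0 j).2])).mp hsum1 i (Finset.mem_univ i)
  linarith

theorem natPath_convex (n : ℕ) (hn : 1 ≤ n) (γ γ' : ℝ → Fin n → ℝ)
    (hγ : IsNatPath n γ) (hγ' : IsNatPath n γ') (u : ℝ) (hu : u ∈ Icc (0:ℝ) 1) :
    IsNatPath n (fun t i => (1 - u) * γ t i + u * γ' t i) := by
  obtain ⟨hu0, hu1⟩ := hu
  have hz := natPath_zero n γ hγ
  have hz' := natPath_zero n γ' hγ'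
  have ht := natPath_top n γ hγ
  have ht' := natPath_top n γ' hγ'
  obtain ⟨hc, hmem, hmono, -, -, hsum⟩ := hγ
  obtain ⟨hc', hmem', hmono', -, -, hsum'⟩ := hγ'
  refine ⟨?_, ?_, ?_, ?_, ?_, ?_⟩
  · apply ContinuousOn.add
    · exact ContinuousOn.mul continuousOn_const hc
    · exact ContinuousOn.mul continuousOn_const hc'
  · intro t htm i
    have h1 := hmem t htm i
    have h2 := hmem' t htm i
    constructor
    · have : (1-u) * γ t i ≥ 0 := mul_nonneg (by linarith) h1.1
      have : u * γ' t i ≥ 0 := mul_nonneg hu0 h2.1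
      simp only
      nlinarith
    · simp only
      nlinarith [h1.2, h2.2]
  · intro s hs t htm hst i
    have h1 := hmono s hs t htm hst i
    have h2 := hmono' s hs t htm hst i
    simp only
    have := mul_le_mul_of_nonneg_left h1 (by linarith : (0:ℝ) ≤ 1 - u)
    have := mul_le_mul_of_nonneg_left h2 hu0
    linarith
  · intro i; left; simp [hz i, hz' i]
  · intro i; right; simp only [ht i, ht' i]; ring
  · intro t htm
    have h1 := hsum t htm
    have h2 := hsum' t htm
    simp only [Finset.sum_add_distrib, ← Finset.mul_sum, h1, h2]
    ring
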